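/- Let L be a Lie ring and H a subring generated by m elements h₁,...,h_m such that every Lie commutator in the h_i is ad-nilpotent in L of index at most n. If H is nilpotent of class c, then there is a number u depending only on c, m, n such that [L, H, H, ..., H] = 0 with u copies of H. -/

import Mathlib

/-- `adIter a y k = [y, a, a, ..., a]` with `k` copies of `a`. -/
def adIter {L : Type} [LieRing L] (a y : L) : ℕ → L
  | 0 => y
  | k + 1 => ⁅adIter a y k, a⁆

/-- `chainBr y f u = [y, f 0, f 1, ..., f (u-1)]`. -/
def chainBr {L : Type} [LieRing L] (y : L) (f : ℕ → L) : ℕ → L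
  | 0 => y
  | k + 1 => ⁅chainBr y f k, f k⁆

/-- The Lie commutators (iterated brackets) in the elements `hs`. -/
inductive IsLieCommWord {L : Type} [LieRing L] {m : ℕ} (hs : Fin m → L) : L → Prop
  | gen (i : Fin m) : IsLieCommWord hs (hs i)
  | br {x y : L} : IsLieCommWord hs x → IsLieCommWord hs y → IsLieCommWord hs ⁅x, y⁆

/-- Membership in the Lie subring generated by the elements `hs`. -/
inductive InLieSubring {L : Type} [LieRing L] {m : ℕ} (hs : Fin m → L) : L → Prop
  | gen (i : Fin m) : InLieSubring hs (hs i)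
  | zero : InLieSubring hs 0
  | add {x y : L} : InLieSubring hs x → InLieSubring hs y → InLieSubring hs (x + y)
  | neg {x : L} : InLieSubring hs x → InLieSubring hs (-x)
  | br {x y : L} : InLieSubring hs x → InLieSubring hs y → InLieSubring hs ⁅x, y⁆

namespace Engel13
open List

/-- Formal Lie words in `m` generators. -/
inductive FW (m : ℕ) where
  | gen : Fin m → FW m
  | br : FW m → FW m → FW m
deriving DecidableEq

namespace FW
variable {m : ℕ}

def wt : FW m → ℕ
  | gen _ => 1
  | br a b => a.wt + b.wt

def key : FW m → ℕ
  | gen i => 2 * i.val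
  | br a b => 2 * Nat.pair a.key b.key + 1

def ev {L : Type} [LieRing L] (hs : Fin m → L) : FW m → L
  | gen i => hs i
  | br a b => ⁅a.ev hs, b.ev hs⁆

lemma wt_pos (w : FW m) : 1 ≤ w.wt := by
  induction w with
  | gen i => simp [wt]
  | br a b ha hb => simp only [wt]; omega

lemma key_inj : ∀ {a b : FW m}, a.key = b.key → a = b := by
  intro a
  induction a with
  | gen i =>
    intro b h; cases b with
    | gen j => simp only [key] at h; have := Fin.val_injective (by omega : i.val = j.val); rw [this]
    | br x y => simp only [key] at h; omega
  | br x y hx hy =>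
    intro b h; cases b with
    | gen j => simp only [key] at h; omega
    | br x' y' =>
      simp only [key] at h
      have h2 : Nat.pair x.key y.key = Nat.pair x'.key y'.key := by omega
      rw [Nat.pair_eq_pair] at h2
      rw [hx h2.1, hy h2.2]

/-- Finsets eventually containing all words of bounded weight. -/
def S (m : ℕ) : ℕ → Finset (FW m)
  | 0 => (Finset.univ : Finset (Fin m)).image gen
  | k + 1 => S m k ∪ (S m k ×ˢ S m k).image (fun p => br p.1 p.2)

lemma S_mono_succ (k : ℕ) : S m k ⊆ S m (k + 1) := by
  intro w hw; simp [S]; left; exact hw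

lemma S_mono {j k : ℕ} (h : j ≤ k) : S m j ⊆ S m k := by
  induction k with
  | zero => simpa [Nat.le_zero.mp h] using Finset.Subset.refl _
  | succ k ih =>
    rcases Nat.lt_or_ge j (k+1) with h' | h'
    · exact fun w hw => S_mono_succ k (ih (by omega) hw)
    · have : j = k + 1 := by omega
      subst this; exact Finset.Subset.refl _

lemma mem_S : ∀ (w : FW m) (k : ℕ), w.wt ≤ k + 1 → w ∈ S m k := by
  intro w
  induction w with
  | gen i =>
    intro k _
    have : gen i ∈ S m 0 := by simp [S]
    exact S_mono (Nat.zero_le k) this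
  | br a b ha hb =>
    intro k hk
    have hwa := wt_pos a; have hwb := wt_pos b
    simp only [wt] at hk
    cases k with
    | zero => omega
    | succ k' =>
      have haS : a ∈ S m k' := ha k' (by omega)
      have hbS : b ∈ S m k' := hb k' (by omega)
      simp only [S, Finset.mem_union, Finset.mem_image, Finset.mem_product]
      right; exact ⟨(a, b), by simp [haS, hbS]⟩

end FW

/-! ### Inversion counting -/

def inv : List ℕ → ℕ
  | [] => 0
  | x :: xs => xs.countP (fun y => decide (y < x)) + inv xs

lemma inv_append_perm : ∀ (p : List ℕ) {t₁ t₂ : List ℕ}, t₁.Perm t₂ →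
    inv (p ++ t₁) + inv t₂ = inv (p ++ t₂) + inv t₁ := by
  intro p
  induction p with
  | nil => intro t₁ t₂ _; simp [Nat.add_comm]
  | cons x p ih =>
    intro t₁ t₂ h
    simp only [cons_append, inv, List.append_eq]
    rw [countP_append, countP_append]
    have h1 := h.countP_eq (fun y => decide (y < x))
    have h2 := ih h
    omega

lemma inv_swap (p : List ℕ) (x y : ℕ) (t : List ℕ) (h : y < x) :
    inv (p ++ x :: y :: t) = inv (p ++ y :: x :: t) + 1 := by
  have hperm : (x :: y :: t).Perm (y :: x :: t) := Perm.swap _ _ _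
  have h1 := inv_append_perm p hperm
  have h2 : inv (x :: y :: t) = inv (y :: x :: t) + 1 := by
    simp only [inv, countP_cons]
    have hx : ¬ (x < y) := by omega
    simp [h, hx]
    omega
  omega

lemma inv_le_sq : ∀ l : List ℕ, inv l ≤ l.length * l.length := by
  intro l
  induction l with
  | nil => simp [inv]
  | cons x xs ih =>
    simp only [inv, length_cons]
    have := xs.countP_le_length (p := fun y => decide (y < x))
    nlinarith

/-! ### Runs in sorted lists -/

section Sorted
variable {m : ℕ}

def rk (a b : FW m) : Prop := a.key ≤ b.key

instance : DecidableRel (rk (m := m)) := fun a b => Nat.decLe _ _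

instance : IsTrans (FW m) rk := ⟨fun _ _ _ h1 h2 => Nat.le_trans h1 h2⟩

lemma count_eq_zero_of_gt {l : List (FW m)} {a : FW m}
    (h : ∀ b ∈ l, a.key < b.key) : l.count a = 0 := by
  rw [count_eq_zero]
  intro hmem
  exact absurd (h a hmem) (lt_irrefl _)

lemma run_front : ∀ (l : List (FW m)), l.Pairwise rk → ∀ (a : FW m),
    (∀ b ∈ l, a.key ≤ b.key) → ∃ q, l = replicate (l.count a) a ++ q := by
  intro l
  induction l with
  | nil => intro _ a _; exact ⟨[], by simp⟩
  | cons x xs ih =>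
    intro hp a hle
    by_cases hxa : x = a
    · subst hxa
      obtain ⟨q, hq⟩ := ih hp.of_cons x (fun b hb => rel_of_pairwise_cons hp hb)
      refine ⟨q, ?_⟩
      rw [count_cons_self, replicate_succ, cons_append, ← hq]
    · have hkey : a.key < x.key := by
        have := hle x mem_cons_self
        rcases Nat.lt_or_ge a.key x.key with h | h
        · exact h
        · exact absurd (FW.key_inj (Nat.le_antisymm h this)) hxa
      have hcount : (x :: xs).count a = 0 := by
        apply count_eq_zero_of_gt
        intro b hb
        rcases mem_cons.mp hb with rfl | hb'
        · exact hkey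
        · exact lt_of_lt_of_le hkey (rel_of_pairwise_cons hp hb')
      exact ⟨x :: xs, by simp [hcount]⟩

lemma run_of_sorted : ∀ (l : List (FW m)), l.Pairwise rk → ∀ (a : FW m),
    ∃ p q, l = p ++ replicate (l.count a) a ++ q := by
  intro l
  induction l with
  | nil => intro _ a; exact ⟨[], [], by simp⟩
  | cons x xs ih =>
    intro hp a
    by_cases hxa : x = a
    · subst hxa
      have hle : ∀ b ∈ x :: xs, x.key ≤ b.key := by
        intro b hb
        rcases mem_cons.mp hb with rfl | hb'
        · exact le_refl _
        · exact rel_of_pairwise_cons hp hb'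
      obtain ⟨q, hq⟩ := run_front (x :: xs) hp x hle
      exact ⟨[], q, by simpa using hq⟩
    · obtain ⟨p, q, hpq⟩ := ih hp.of_cons a
      refine ⟨x :: p, q, ?_⟩
      rw [count_cons_of_ne hxa]
      conv_lhs => rw [hpq]
      simp only [cons_append]

lemma exists_desc {α : Type} (r : α → α → Prop) [DecidableRel r] :
    ∀ l : List α, ¬ l.Chain' r → ∃ p a b q, l = p ++ a :: b :: q ∧ ¬ r a b := by
  intro l
  induction l with
  | nil => intro h; exact absurd isChain_nil h
  | cons x xs ih =>
    intro h
    cases xs with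
    | nil => exact absurd (isChain_singleton x) h
    | cons y ys =>
      rw [Chain', isChain_cons_cons] at h
      by_cases hr : r x y
      · have : ¬ (y :: ys).Chain' r := fun hc => h ⟨hr, hc⟩
        obtain ⟨p, a, b, q, hpq, hab⟩ := ih this
        exact ⟨x :: p, a, b, q, by rw [hpq, cons_append], hab⟩
      · exact ⟨[], x, y, ys, rfl, hr⟩

/-- Pigeonhole: a long list of words of weight `≤ c` has a repeated entry. -/
lemma exists_count_ge {c n : ℕ} (hn : 1 ≤ n) (l : List (FW m))
    (hmem : ∀ a ∈ l, a.wt ≤ c)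
    (hlen : (FW.S m c).card * (n - 1) + 1 ≤ l.length) :
    ∃ a, n ≤ l.count a := by
  by_contra hcon
  push_neg at hcon
  have hsub : l.toFinset ⊆ FW.S m c := by
    intro a ha
    exact FW.mem_S a c (Nat.le_succ_of_le (hmem a (mem_toFinset.mp ha)))
  have hsum : ∑ a ∈ l.toFinset, l.count a = l.length := sum_toFinset_count_eq_length l
  have hbound : ∑ a ∈ l.toFinset, l.count a ≤ ∑ _a ∈ l.toFinset, (n - 1) := by
    apply Finset.sum_le_sum
    intro a _
    have := hcon a
    omega
  have hcard : l.toFinset.card ≤ (FW.S m c).card := Finset.card_le_card hsub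
  simp only [Finset.sum_const, smul_eq_mul] at hbound
  have : l.length ≤ (FW.S m c).card * (n - 1) := by
    calc l.length = ∑ a ∈ l.toFinset, l.count a := hsum.symm
    _ ≤ l.toFinset.card * (n - 1) := hbound
    _ ≤ (FW.S m c).card * (n - 1) := Nat.mul_le_mul_right _ hcard
  omega


/-! ### Left-normed bracket folds -/

end Sorted

section Fold
variable {L : Type} [LieRing L]

def bf (y : L) (l : List L) : L := l.foldl (fun z a => ⁅z, a⁆) y

@[simp] lemma bf_nil (y : L) : bf y [] = y := rfl
@[simp] lemma bf_cons (y x : L) (l : List L) : bf y (x :: l) = bf ⁅y, x⁆ l := rfl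

lemma bf_append (y : L) (l₁ l₂ : List L) : bf y (l₁ ++ l₂) = bf (bf y l₁) l₂ :=
  List.foldl_append

lemma bf_concat (y x : L) (l : List L) : bf y (l ++ [x]) = ⁅bf y l, x⁆ := by
  rw [bf_append]; rfl

lemma bf_zero (l : List L) : bf 0 l = 0 := by
  induction l with
  | nil => rfl
  | cons x l ih => rw [bf_cons, zero_lie]; exact ih

lemma bf_add (l : List L) : ∀ y z : L, bf (y + z) l = bf y l + bf z l := by
  induction l with
  | nil => intro y z; rfl
  | cons x l ih => intro y z; rw [bf_cons, add_lie, ih, bf_cons, bf_cons]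

lemma bf_mid_zero (y : L) (p q : List L) : bf y (p ++ 0 :: q) = 0 := by
  rw [bf_append, bf_cons, lie_zero, bf_zero]

lemma chainBr_eq_bf (y : L) (f : ℕ → L) : ∀ u : ℕ, chainBr y f u = bf y ((range u).map f)
  | 0 => rfl
  | u + 1 => by
    rw [chainBr, chainBr_eq_bf y f u, range_succ, map_append]
    simp only [map_cons, map_nil]
    rw [bf_concat]

lemma adIter_eq_bf (a y : L) : ∀ k : ℕ, adIter a y k = bf y (replicate k a)
  | 0 => rfl
  | k + 1 => by
    rw [adIter, adIter_eq_bf a y k, replicate_succ', bf_concat]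

end Fold

/-! ### The descending filtration `D` and nilpotency consequences -/

section Dfil
variable {L : Type} [LieRing L] {m : ℕ} (hs : Fin m → L)

def GenSet (k : ℕ) : Set L :=
  {x | ∃ z l, InLieSubring hs z ∧ (∀ a ∈ l, InLieSubring hs a) ∧ k ≤ l.length + 1 ∧ x = bf z l}

def D (k : ℕ) : AddSubgroup L := AddSubgroup.closure (GenSet hs k)

lemma D_antitone {j k : ℕ} (h : j ≤ k) : D hs k ≤ D hs j := by
  apply AddSubgroup.closure_mono
  rintro x ⟨z, l, hz, hl, hk, rfl⟩
  exact ⟨z, l, hz, hl, le_trans h hk, rfl⟩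

lemma lie_H_mem {p : ℕ} {x h : L} (hx : x ∈ D hs p) (hh : InLieSubring hs h) :
    ⁅x, h⁆ ∈ D hs (p + 1) := by
  refine AddSubgroup.closure_induction (p := fun x _ => ⁅x, h⁆ ∈ D hs (p + 1)) ?_ ?_ ?_ ?_ hx
  · rintro x ⟨z, l, hz, hl, hk, rfl⟩
    refine AddSubgroup.subset_closure ⟨z, l ++ [h], hz, ?_, by simp; omega, (bf_concat z h l).symm⟩
    intro a ha
    rcases mem_append.mp ha with ha | ha
    · exact hl a ha
    · rw [mem_singleton.mp ha]; exact hh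
  · show ⁅(0 : L), h⁆ ∈ _
    rw [zero_lie]; exact zero_mem _
  · intro a b _ _ hA hB; show ⁅a + b, h⁆ ∈ _
    rw [add_lie]; exact add_mem hA hB
  · intro a _ hA; show ⁅-a, h⁆ ∈ _
    rw [neg_lie]; exact neg_mem hA

lemma lie_gen_mem : ∀ (l : List L) (z : L), InLieSubring hs z → (∀ a ∈ l, InLieSubring hs a) →
    ∀ (p : ℕ) (x : L), x ∈ D hs p → ⁅x, bf z l⁆ ∈ D hs (p + l.length + 1) := by
  intro l
  induction l using List.reverseRecOn with
  | nil => intro z hz _ p x hx; simpa using lie_H_mem hs hx hz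
  | append_singleton l h ih =>
    intro z hz hl p x hx
    have hh : InLieSubring hs h := hl h (by simp)
    have hl' : ∀ a ∈ l, InLieSubring hs a := fun a ha => hl a (by simp [ha])
    rw [bf_concat]
    set Y := bf z l with hY
    have e : ⁅x, ⁅Y, h⁆⁆ = ⁅⁅x, Y⁆, h⁆ - ⁅⁅x, h⁆, Y⁆ := by
      rw [leibniz_lie]
      have : ⁅Y, ⁅x, h⁆⁆ = -⁅⁅x, h⁆, Y⁆ := (lie_skew _ _).symm
      rw [this]; abel
    rw [e]
    have t1 : ⁅⁅x, Y⁆, h⁆ ∈ D hs (p + l.length + 2) :=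
      lie_H_mem hs (ih z hz hl' p x hx) hh
    have t2 : ⁅⁅x, h⁆, Y⁆ ∈ D hs (p + 1 + l.length + 1) :=
      ih z hz hl' (p + 1) ⁅x, h⁆ (lie_H_mem hs hx hh)
    have e1 : p + (l ++ [h]).length + 1 = p + l.length + 2 := by simp; omega
    have e2 : p + 1 + l.length + 1 = p + l.length + 2 := by omega
    rw [e1]
    exact sub_mem t1 (e2 ▸ t2)

lemma lie_D_mem {p q : ℕ} {x y : L} (hx : x ∈ D hs p) (hy : y ∈ D hs q) :
    ⁅x, y⁆ ∈ D hs (p + q) := by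
  refine AddSubgroup.closure_induction (p := fun y _ => ⁅x, y⁆ ∈ D hs (p + q)) ?_ ?_ ?_ ?_ hy
  · rintro y ⟨z, l, hz, hl, hk, rfl⟩
    exact D_antitone hs (by omega) (lie_gen_mem hs l z hz hl p x hx)
  · show ⁅x, (0 : L)⁆ ∈ _
    rw [lie_zero]; exact zero_mem _
  · intro a b _ _ hA hB; show ⁅x, a + b⁆ ∈ _
    rw [lie_add]; exact add_mem hA hB
  · intro a _ hA; show ⁅x, -a⁆ ∈ _
    rw [lie_neg]; exact neg_mem hA

lemma ev_mem_D : ∀ w : FW m, FW.ev hs w ∈ D hs w.wt := by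
  intro w
  induction w with
  | gen i =>
    exact AddSubgroup.subset_closure ⟨hs i, [], InLieSubring.gen i, by simp, by simp [FW.wt], rfl⟩
  | br a b ha hb => exact lie_D_mem hs ha hb

lemma ev_is_word : ∀ w : FW m, IsLieCommWord hs (FW.ev hs w) := by
  intro w
  induction w with
  | gen i => exact IsLieCommWord.gen i
  | br a b ha hb => exact IsLieCommWord.br ha hb

variable {c : ℕ}
  (hnil : ∀ f : ℕ → L, (∀ i, i ≤ c → InLieSubring hs (f i)) →
    chainBr (f 0) (fun k => f (k + 1)) c = 0)

include hnil

lemma bf_take_chain : ∀ (k : ℕ) (l : List L) (z : L), k ≤ l.length →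
    bf z (l.take k) = chainBr z (fun i => l.getD i 0) k := by
  intro k
  induction k with
  | zero => intro l z _; simp [chainBr]
  | succ k ih =>
    intro l z hk
    have hlt : k < l.length := by omega
    rw [chainBr, ← ih l z (by omega), List.take_succ]
    rw [List.getElem?_eq_getElem hlt]
    simp only [Option.toList_some]
    rw [bf_concat]
    congr 1
    simp [List.getD_eq_getElem?_getD, List.getElem?_eq_getElem hlt]

lemma claimA (z : L) (l : List L) (hz : InLieSubring hs z)
    (hl : ∀ a ∈ l, InLieSubring hs a) (hc : c ≤ l.length) : bf z l = 0 := by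
  set f : ℕ → L := fun i => (z :: l).getD i 0 with hf
  have hfH : ∀ i, i ≤ c → InLieSubring hs (f i) := by
    intro i hi
    have hlt : i < (z :: l).length := by simp; omega
    have : f i = (z :: l)[i] := by
      simp [hf, List.getD_eq_getElem?_getD, List.getElem?_eq_getElem hlt]
    rw [this]
    have hmem := List.getElem_mem hlt
    rcases mem_cons.mp hmem with h | h
    · rw [h]; exact hz
    · exact hl _ h
  have h0 := hnil f hfH
  have hf0 : f 0 = z := rfl
  have hshift : ∀ i, f (i + 1) = l.getD i 0 := fun i => rfl
  have htake : bf z (l.take c) = 0 := by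
    rw [bf_take_chain hs hnil c l z hc]
    have hfun : (fun k => f (k + 1)) = (fun i => l.getD i (0 : L)) := funext hshift
    rw [hfun, hf0] at h0
    exact h0
  calc bf z l = bf z (l.take c ++ l.drop c) := by rw [take_append_drop]
  _ = bf (bf z (l.take c)) (l.drop c) := bf_append _ _ _
  _ = bf 0 (l.drop c) := by rw [htake]
  _ = 0 := bf_zero _

lemma D_top_eq_bot : ∀ x ∈ D hs (c + 1), x = 0 := by
  intro x hx
  have : D hs (c + 1) ≤ ⊥ := by
    rw [D, AddSubgroup.closure_le]
    rintro x ⟨z, l, hz, hl, hk, rfl⟩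
    simp only [SetLike.mem_coe, AddSubgroup.mem_bot]
    exact claimA hs hnil z l hz hl (by omega)
  simpa using this hx

lemma ev_eq_zero_of_wt_gt {w : FW m} (hw : c + 1 ≤ w.wt) : FW.ev hs w = 0 :=
  D_top_eq_bot hs hnil _ (D_antitone hs hw (ev_mem_D hs w))

end Dfil

/-! ### Spanning by words -/

section Span
variable {L : Type} [LieRing L] {m : ℕ} (hs : Fin m → L)

def Words : Set L := {x | ∃ w : FW m, x = FW.ev hs w}

lemma lie_mem_closure (G₁ G₂ : Set L) (T : AddSubgroup L)
    (h : ∀ g₁ ∈ G₁, ∀ g₂ ∈ G₂, ⁅g₁, g₂⁆ ∈ T) :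
    ∀ a ∈ AddSubgroup.closure G₁, ∀ b ∈ AddSubgroup.closure G₂, ⁅a, b⁆ ∈ T := by
  intro a ha
  refine AddSubgroup.closure_induction
    (p := fun a _ => ∀ b ∈ AddSubgroup.closure G₂, ⁅a, b⁆ ∈ T) ?_ ?_ ?_ ?_ ha
  · intro g hg b hb
    refine AddSubgroup.closure_induction (p := fun b _ => ⁅g, b⁆ ∈ T) ?_ ?_ ?_ ?_ hb
    · exact fun g₂ hg₂ => h g hg g₂ hg₂
    · show ⁅g, (0 : L)⁆ ∈ T
      rw [lie_zero]; exact zero_mem _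
    · intro x y _ _ hx hy; show ⁅g, x + y⁆ ∈ T
      rw [lie_add]; exact add_mem hx hy
    · intro x _ hx; show ⁅g, -x⁆ ∈ T
      rw [lie_neg]; exact neg_mem hx
  · intro b _; show ⁅(0 : L), b⁆ ∈ T
    rw [zero_lie]; exact zero_mem _
  · intro x y _ _ hx hy b hb; show ⁅x + y, b⁆ ∈ T
    rw [add_lie]; exact add_mem (hx b hb) (hy b hb)
  · intro x _ hx b hb; show ⁅-x, b⁆ ∈ T
    rw [neg_lie]; exact neg_mem (hx b hb)

lemma mem_words_closure {x : L} (hx : InLieSubring hs x) :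
    x ∈ AddSubgroup.closure (Words hs) := by
  induction hx with
  | gen i => exact AddSubgroup.subset_closure ⟨FW.gen i, rfl⟩
  | zero => exact zero_mem _
  | add hx hy ihx ihy => exact add_mem ihx ihy
  | neg hx ihx => exact neg_mem ihx
  | br hx hy ihx ihy =>
    refine lie_mem_closure (Words hs) (Words hs) _ ?_ _ ihx _ ihy
    rintro g₁ ⟨w₁, rfl⟩ g₂ ⟨w₂, rfl⟩
    exact AddSubgroup.subset_closure ⟨FW.br w₁ w₂, rfl⟩

lemma bf_mem_word_closure (y : L) :
    ∀ l : List L, (∀ x ∈ l, x ∈ AddSubgroup.closure (Words hs)) →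
      bf y l ∈ AddSubgroup.closure
        {x | ∃ wl : List (FW m), wl.length = l.length ∧ x = bf y (wl.map (FW.ev hs))} := by
  intro l
  induction l using List.reverseRecOn with
  | nil => intro _; exact AddSubgroup.subset_closure ⟨[], rfl, rfl⟩
  | append_singleton l a ih =>
    intro hmem
    rw [bf_concat]
    refine lie_mem_closure
      {x | ∃ wl : List (FW m), wl.length = l.length ∧ x = bf y (wl.map (FW.ev hs))}
      (Words hs) _ ?_ _ (ih fun x hx => hmem x (by simp [hx])) _ (hmem a (by simp))
    rintro g₁ ⟨wl, hlen, rfl⟩ g₂ ⟨w, rfl⟩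
    refine AddSubgroup.subset_closure ⟨wl ++ [w], by simp [hlen], ?_⟩
    rw [map_append]
    simp only [map_cons, map_nil]
    rw [bf_concat]

end Span
end Engel13
section MLsec
open List Engel13 Engel13.FW

variable {L : Type} [LieRing L] {m c n : ℕ} (hs : Fin m → L)

/-- total weight of a list of words -/
def wS (l : List (FW m)) : ℕ := (l.map FW.wt).sum

lemma wS_le (l : List (FW m)) (h : ∀ a ∈ l, a.wt ≤ c) : wS l ≤ c * l.length := by
  have := List.sum_le_card_nsmul (l.map FW.wt) c (by
    intro x hx; obtain ⟨a, ha, rfl⟩ := mem_map.mp hx; exact h a ha)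
  simpa [wS, mul_comm] using this

lemma le_wS (l : List (FW m)) : l.length ≤ wS l := by
  have := List.length_le_sum_of_one_le (l.map FW.wt) (by
    intro x hx; obtain ⟨a, ha, rfl⟩ := mem_map.mp hx; exact FW.wt_pos a)
  simpa [wS] using this

variable (had : ∀ x : L, IsLieCommWord hs x → ∀ y : L, adIter x y n = 0)
  (hnil : ∀ f : ℕ → L, (∀ i, i ≤ c → InLieSubring hs (f i)) →
    chainBr (f 0) (fun k => f (k + 1)) c = 0)
  (hn : 0 < n) (hc : 0 < c)

include had hnil hn hc in
lemma ML : ∀ (M : ℕ) (l : List (FW m)) (y : L),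
    (∀ a ∈ l, a.wt ≤ c) →
    (c * l.length - wS l) * (l.length * l.length + 1) + inv (l.map FW.key) ≤ M →
    c * ((FW.S m c).card * (n - 1) + 1) ≤ wS l →
    bf y (l.map (FW.ev hs)) = 0 := by
  intro M
  induction M using Nat.strong_induction_on with
  | _ M IH =>
  intro l y hwt hM hws
  have hup : wS l ≤ c * l.length := wS_le l hwt
  have hlo : l.length ≤ wS l := le_wS l
  have hT : (FW.S m c).card * (n - 1) + 1 ≤ l.length := by
    have h1 : c * ((FW.S m c).card * (n - 1) + 1) ≤ c * l.length := le_trans hws hup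
    exact Nat.le_of_mul_le_mul_left h1 hc
  by_cases hsort : l.Chain' rk
  · -- sorted case: pigeonhole and kill a run of n equal entries
    have hpw : l.Pairwise rk := isChain_iff_pairwise.mp hsort
    obtain ⟨a, hcount⟩ := exists_count_ge hn l hwt hT
    obtain ⟨p, q, hpq⟩ := run_of_sorted l hpw a
    set k := l.count a - n with hk
    have hcnt : l.count a = n + k := by omega
    rw [hcnt, replicate_add] at hpq
    have key : bf y (l.map (FW.ev hs)) =
        bf (bf (adIter (FW.ev hs a) (bf y (p.map (FW.ev hs))) n)
          (replicate k (FW.ev hs a))) (q.map (FW.ev hs)) := by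
      rw [hpq]
      simp only [map_append, map_replicate]
      rw [bf_append, bf_append, bf_append, adIter_eq_bf]
    rw [key, had _ (ev_is_word hs a), bf_zero, bf_zero]
  · -- unsorted: swap an adjacent inversion
    obtain ⟨p, a, b, q, hl, hab⟩ := exists_desc rk l hsort
    have hkey : b.key < a.key := Nat.lt_of_not_le hab
    have hmem_a : a ∈ l := by rw [hl]; simp
    have hmem_b : b ∈ l := by rw [hl]; simp
    set A := FW.ev hs a with hA
    set B := FW.ev hs b with hB
    set Z := bf y (p.map (FW.ev hs)) with hZ
    have swap_id : ⁅⁅Z, A⁆, B⁆ = ⁅⁅Z, B⁆, A⁆ + ⁅Z, ⁅A, B⁆⁆ := by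
      rw [lie_lie, ← lie_skew A ⁅Z, B⁆]
      abel
    have e0 : bf y (l.map (FW.ev hs)) = bf ⁅⁅Z, A⁆, B⁆ (q.map (FW.ev hs)) := by
      rw [hl]; simp only [map_append, map_cons]; rw [bf_append, bf_cons, bf_cons]
    set l₁ : List (FW m) := p ++ b :: a :: q with hl₁
    set l₂ : List (FW m) := p ++ FW.br a b :: q with hl₂
    have e1 : bf y (l₁.map (FW.ev hs)) = bf ⁅⁅Z, B⁆, A⁆ (q.map (FW.ev hs)) := by
      rw [hl₁]; simp only [map_append, map_cons]; rw [bf_append, bf_cons, bf_cons]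
    have e2 : bf y (l₂.map (FW.ev hs)) = bf ⁅Z, ⁅A, B⁆⁆ (q.map (FW.ev hs)) := by
      rw [hl₂]; simp only [map_append, map_cons]; rw [bf_append, bf_cons]; rfl
    have hmain : bf y (l.map (FW.ev hs)) =
        bf y (l₁.map (FW.ev hs)) + bf y (l₂.map (FW.ev hs)) := by
      rw [e0, e1, e2, swap_id, bf_add]
    -- kill term 1 by the IH (fewer inversions)
    have perm₁ : l₁.Perm l := by
      rw [hl, hl₁]; exact (Perm.swap a b q).append_left p
    have hwt₁ : ∀ w ∈ l₁, w.wt ≤ c := fun w hw => hwt w (perm₁.mem_iff.mp hw)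
    have hws₁ : wS l₁ = wS l := (perm₁.map FW.wt).sum_eq
    have hlen₁ : l₁.length = l.length := perm₁.length_eq
    have hinv : inv (l.map FW.key) = inv (l₁.map FW.key) + 1 := by
      rw [hl, hl₁]
      simp only [map_append, map_cons]
      exact inv_swap (p.map FW.key) a.key b.key (q.map FW.key) hkey
    have t1 : bf y (l₁.map (FW.ev hs)) = 0 := by
      refine IH ((c * l₁.length - wS l₁) * (l₁.length * l₁.length + 1) + inv (l₁.map FW.key))
        ?_ l₁ y hwt₁ le_rfl (by rw [hws₁]; exact hws)
      rw [hws₁, hlen₁]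
      omega
    -- kill term 2
    have t2 : bf y (l₂.map (FW.ev hs)) = 0 := by
      by_cases habwt : (FW.br a b).wt ≤ c
      · -- recurse: strictly smaller slack
        have hwt₂ : ∀ w ∈ l₂, w.wt ≤ c := by
          intro w hw
          rw [hl₂] at hw
          rcases mem_append.mp hw with h | h
          · exact hwt w (by rw [hl]; exact mem_append.mpr (Or.inl h))
          · rcases mem_cons.mp h with rfl | h'
            · exact habwt
            · exact hwt w (by rw [hl]; simp [h'])
        have hlen₂ : l₂.length + 1 = l.length := by rw [hl, hl₂]; simp; omega
        have hws₂ : wS l₂ = wS l := by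
          rw [hl, hl₂]
          simp only [wS, map_append, map_cons, sum_append, sum_cons]
          have hab' : (FW.br a b).wt = a.wt + b.wt := rfl
          omega
        have hup₂ : wS l₂ ≤ c * l₂.length := wS_le l₂ hwt₂
        -- arithmetic: measure strictly decreases
        have harith : (c * l₂.length - wS l₂) * (l₂.length * l₂.length + 1) + inv (l₂.map FW.key)
            < (c * l.length - wS l) * (l.length * l.length + 1) + inv (l.map FW.key) := by
          have hinv₂ : inv (l₂.map FW.key) ≤ l₂.length * l₂.length := by
            have := inv_le_sq (l₂.map FW.key)
            simpa using this
          set s := c * l.length - wS l with hs'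
          set s₂ := c * l₂.length - wS l₂ with hs₂'
          have hcl : c * l.length = c * l₂.length + c := by
            rw [← hlen₂, Nat.mul_succ]
          have h1 : s₂ + c = s := by
            rw [hs₂', hs', hws₂, hcl]
            omega
          have h2 : 1 ≤ s := by omega
          have h3 : s₂ ≤ s - 1 := by omega
          have hL : l₂.length * l₂.length + 1 ≤ l.length * l.length + 1 := by
            have : l₂.length ≤ l.length := by omega
            exact Nat.succ_le_succ (Nat.mul_le_mul this this)
          calc s₂ * (l₂.length * l₂.length + 1) + inv (l₂.map FW.key)
              ≤ (s - 1) * (l.length * l.length + 1) + l₂.length * l₂.length :=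
                Nat.add_le_add (Nat.mul_le_mul h3 hL) hinv₂
            _ < (s - 1) * (l.length * l.length + 1) + (l.length * l.length + 1) := by
                have : l₂.length * l₂.length < l.length * l.length + 1 := by
                  have : l₂.length ≤ l.length := by omega
                  have := Nat.mul_le_mul this this
                  omega
                omega
            _ = s * (l.length * l.length + 1) := by
                have : s - 1 + 1 = s := by omega
                rw [← this, Nat.add_mul, Nat.one_mul, this]
            _ ≤ s * (l.length * l.length + 1) + inv (l.map FW.key) := Nat.le_add_right _ _
        refine IH ((c * l₂.length - wS l₂) * (l₂.length * l₂.length + 1) + inv (l₂.map FW.key))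
          (lt_of_lt_of_le harith hM) l₂ y hwt₂ le_rfl (by rw [hws₂]; exact hws)
      · -- the merged entry has weight > c hence evaluates to 0
        have h0 : FW.ev hs (FW.br a b) = 0 :=
          ev_eq_zero_of_wt_gt hs hnil (by omega)
        rw [hl₂]
        simp only [map_append, map_cons]
        rw [h0]
        exact bf_mid_zero _ _ _
    rw [hmain, t1, t2, add_zero]

include had hnil hn hc in
lemma top_words : ∀ (wl : List (FW m)) (y : L),
    c * ((FW.S m c).card * (n - 1) + 1) ≤ wS wl → bf y (wl.map (FW.ev hs)) = 0 := by
  intro wl y hws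
  by_cases hall : ∀ a ∈ wl, a.wt ≤ c
  · exact ML hs had hnil hn hc _ wl y hall le_rfl hws
  · push_neg at hall
    obtain ⟨a, ha, hgt⟩ := hall
    obtain ⟨s, t, rfl⟩ := List.append_of_mem ha
    have h0 : FW.ev hs a = 0 := ev_eq_zero_of_wt_gt hs hnil (by omega)
    rw [map_append, map_cons, h0]
    exact bf_mid_zero _ _ _

end MLsec


open List Engel13

/-- if `H = ⟨h₁, ..., h_m⟩` is a subring of a Lie ring `L` such that every
Lie commutator in the `h_i` is ad-nilpotent in `L` of index at most `n`, and `H` is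
nilpotent of class `c` (every left-normed bracket of `c+1` elements of `H` vanishes),
then there is `u = u(c, m, n)` with `[L, H, ..., H] = 0` (`u` copies of `H`). -/
theorem lie_subring_engelizes_ambient_ring
    (c m n : ℕ) :
    ∃ u : ℕ, ∀ (L : Type) [inst : LieRing L] (hs : Fin m → L),
      (∀ x : L, IsLieCommWord hs x → ∀ y : L, adIter x y n = 0) →
      (∀ f : ℕ → L, (∀ i, i ≤ c → InLieSubring hs (f i)) →
        chainBr (f 0) (fun k => f (k + 1)) c = 0) →
      ∀ (y : L) (f : ℕ → L), (∀ i, InLieSubring hs (f i)) → chainBr y f u = 0 := by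
  classical
  rcases Nat.eq_zero_or_pos c with hc0 | hc
  · -- `c = 0`: the subring is trivial
    refine ⟨1, ?_⟩
    intro L _ hs had hnil y f hf
    have hzero : ∀ x : L, InLieSubring hs x → x = 0 := by
      intro x hx
      have := hnil (fun _ => x) (fun i _ => hx)
      rw [hc0] at this
      exact this
    show ⁅chainBr y f 0, f 0⁆ = 0
    rw [show chainBr y f 0 = y from rfl, hzero (f 0) (hf 0), lie_zero]
  rcases Nat.eq_zero_or_pos m with hm0 | hm
  · -- `m = 0`: no generators, the subring is trivial
    refine ⟨1, ?_⟩
    intro L _ hs had hnil y f hf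
    have hzero : ∀ x : L, InLieSubring hs x → x = 0 := by
      intro x hx
      induction hx with
      | gen i => exact absurd i.2 (by omega)
      | zero => rfl
      | add _ _ h1 h2 => rw [h1, h2, add_zero]
      | neg _ h1 => rw [h1, neg_zero]
      | br _ _ h1 h2 => rw [h1, zero_lie]
    show ⁅chainBr y f 0, f 0⁆ = 0
    rw [show chainBr y f 0 = y from rfl, hzero (f 0) (hf 0), lie_zero]
  rcases Nat.eq_zero_or_pos n with hn0 | hn
  · -- `n = 0`: the whole Lie ring is trivial
    refine ⟨1, ?_⟩
    intro L _ hs had hnil y f hf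
    have htriv : ∀ z : L, z = 0 := by
      intro z
      have := had (hs ⟨0, hm⟩) (IsLieCommWord.gen _) z
      rw [hn0] at this
      exact this
    exact htriv _
  · -- main case
    refine ⟨c * ((FW.S m c).card * (n - 1) + 1), ?_⟩
    intro L _ hs had hnil y f hf
    set u := c * ((FW.S m c).card * (n - 1) + 1) with hu
    rw [chainBr_eq_bf]
    have hmem : ∀ x ∈ (range u).map f, x ∈ AddSubgroup.closure (Words hs) := by
      intro x hx
      obtain ⟨i, _, rfl⟩ := mem_map.mp hx
      exact mem_words_closure hs (hf i)
    have hspan := bf_mem_word_closure hs y ((range u).map f) hmem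
    have hC : AddSubgroup.closure
        {x | ∃ wl : List (FW m), wl.length = ((range u).map f).length ∧
          x = bf y (wl.map (FW.ev hs))} ≤ ⊥ := by
      rw [AddSubgroup.closure_le]
      rintro x ⟨wl, hlen, rfl⟩
      simp only [SetLike.mem_coe, AddSubgroup.mem_bot]
      apply top_words hs had hnil hn hc wl y
      have h1 : wl.length = u := by rw [hlen]; simp
      have h2 : wl.length ≤ wS wl := le_wS wl
      omega
    simpa using hC hspan
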